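/- Let a, b ∈ ℝ, k > 0, and let u : ℝ → ℂ be Schwartz. Write L u = i a u″ + b u‴. Then Re ∬_{{(x,y) ∈ ℝ² : y ≥ x}} e^{−2k(y−x)} [ (Lu)(y) \overline{u(x)} + u(y) \overline{(Lu)(x)} ] dy dx = 0; i.e., the real part of the trace of (k−∂)^{−1}(Lu)(k+∂)^{−1}ū + (k−∂)^{−1}u(k+∂)^{−1}\overline{Lu} vanishes. -/

import Mathlib

open MeasureTheory

section LPTVsection
open Filter Set Complex Topology

noncomputable section

namespace LPTV

variable {c : ℝ}

def H (c : ℝ) (f : ℝ → ℂ) (x : ℝ) : ℂ :=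
  ∫ y in Ici x, ((Real.exp (-(c * (y - x))) : ℝ) : ℂ) * f y

lemma contE (c x : ℝ) : Continuous fun y : ℝ => ((Real.exp (-(c * (y - x))) : ℝ) : ℂ) := by
  fun_prop

lemma integrableOn_E_mul (hc : 0 < c) (f : SchwartzMap ℝ ℂ) (x : ℝ) :
    IntegrableOn (fun y => ((Real.exp (-(c * (y - x))) : ℝ) : ℂ) * f y) (Ici x) := by
  refine Integrable.mono' ((f.integrable (μ := volume)).norm.integrableOn)
    (((contE c x).mul f.continuous).aestronglyMeasurable) ?_
  filter_upwards [ae_restrict_mem measurableSet_Ici] with y hy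
  have h1 : Real.exp (-(c * (y - x))) ≤ 1 := by
    rw [Real.exp_le_one_iff]
    have : (x:ℝ) ≤ y := hy
    nlinarith
  rw [norm_mul]
  have h2 : ‖((Real.exp (-(c * (y - x))) : ℝ) : ℂ)‖ = Real.exp (-(c * (y - x))) := by
    rw [Complex.norm_real, Real.norm_eq_abs, abs_of_pos (Real.exp_pos _)]
  rw [h2]
  exact mul_le_of_le_one_left (norm_nonneg _) h1

lemma split {g : ℝ → ℂ} (hint : ∀ p : ℝ, IntegrableOn g (Ioi p)) (p : ℝ) :
    ∫ y in Ioi p, g y = (∫ y in Ioi (0:ℝ), g y) - ∫ y in (0:ℝ)..p, g y := by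
  rcases le_total p 0 with h | h
  · have e := setIntegral_union (Ioc_disjoint_Ioi (le_refl (0:ℝ))) measurableSet_Ioi
      ((hint p).mono_set Ioc_subset_Ioi_self) (hint 0)
    rw [Ioc_union_Ioi_eq_Ioi h] at e
    rw [intervalIntegral.integral_symm, intervalIntegral.integral_of_le h, e]
    abel
  · have e := setIntegral_union (Ioc_disjoint_Ioi (le_refl p)) measurableSet_Ioi
      ((hint 0).mono_set Ioc_subset_Ioi_self) (hint p)
    rw [Ioc_union_Ioi_eq_Ioi h] at e
    rw [intervalIntegral.integral_of_le h, e]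
    abel

lemma integrableOn_g (hc : 0 < c) (f : SchwartzMap ℝ ℂ) (p : ℝ) :
    IntegrableOn (fun y => ((Real.exp (-(c * y)) : ℝ) : ℂ) * f y) (Ioi p) := by
  have h0 : IntegrableOn
      (fun y => ((Real.exp (-(c * p)) : ℝ) : ℂ) * (((Real.exp (-(c * (y - p))) : ℝ) : ℂ) * f y))
      (Ici p) := (integrableOn_E_mul hc f p).const_mul _
  have h1 := h0.mono_set Ioi_subset_Ici_self
  refine h1.congr (ae_of_all _ fun y => ?_)
  beta_reduce
  rw [← mul_assoc, ← Complex.ofReal_mul, ← Real.exp_add]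
  ring_nf

lemma H_eq (hc : 0 < c) (f : SchwartzMap ℝ ℂ) (x : ℝ) :
    H c f x = ((Real.exp (c * x) : ℝ) : ℂ) *
      ((∫ y in Ioi (0:ℝ), ((Real.exp (-(c * y)) : ℝ) : ℂ) * f y)
        - ∫ y in (0:ℝ)..x, ((Real.exp (-(c * y)) : ℝ) : ℂ) * f y) := by
  unfold H
  rw [integral_Ici_eq_integral_Ioi, ← split (integrableOn_g hc f) x, ← integral_const_mul]
  refine setIntegral_congr_fun measurableSet_Ioi fun y _ => ?_
  rw [← mul_assoc, ← Complex.ofReal_mul, ← Real.exp_add]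
  ring_nf

lemma H_hasDerivAt (hc : 0 < c) (f : SchwartzMap ℝ ℂ) (x : ℝ) :
    HasDerivAt (H c f) (c * H c f x - f x) x := by
  set g : ℝ → ℂ := fun y => ((Real.exp (-(c * y)) : ℝ) : ℂ) * f y with hg
  have hgc : Continuous g := by
    apply Continuous.mul _ f.continuous
    fun_prop
  set A : ℂ := ∫ y in Ioi (0:ℝ), g y with hA
  have hS : HasDerivAt (fun t => ∫ y in (0:ℝ)..t, g y) (g x) x :=
    intervalIntegral.integral_hasDerivAt_right (hgc.intervalIntegrable _ _)
      (hgc.stronglyMeasurableAtFilter _ _) hgc.continuousAt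
  have hE : HasDerivAt (fun t : ℝ => ((Real.exp (c * t) : ℝ) : ℂ))
      (((c * Real.exp (c * x) : ℝ)) : ℂ) x := by
    have h1 : HasDerivAt (fun t : ℝ => Real.exp (c * t)) (Real.exp (c * x) * c) x := by
      simpa using ((hasDerivAt_id x).const_mul c).exp
    have := h1.ofReal_comp
    convert this using 1
    push_cast; ring
  have hprod := hE.mul (hS.const_sub A)
  have hfun : H c ⇑f = fun t => ((Real.exp (c * t) : ℝ) : ℂ) * (A - ∫ y in (0:ℝ)..t, g y) :=
    funext fun t => H_eq hc f t
  rw [hfun]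
  refine hprod.congr_deriv ?_
  have hden : ((Real.exp (c * x) : ℝ) : ℂ) * g x = f x := by
    rw [hg]
    rw [← mul_assoc, ← Complex.ofReal_mul, ← Real.exp_add]
    norm_num
  beta_reduce
  rw [Complex.ofReal_mul]
  linear_combination -hden

lemma integrableOn_exp_ker (hc : 0 < c) (x : ℝ) :
    IntegrableOn (fun y => Real.exp (-(c * (y - x)))) (Ioi x) := by
  have h1 := (exp_neg_integrableOn_Ioi x hc).const_mul (Real.exp (c * x))
  refine h1.congr (ae_of_all _ fun y => ?_)
  beta_reduce
  rw [← Real.exp_add]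
  ring_nf

lemma integral_exp_ker (hc : 0 < c) (x : ℝ) :
    ∫ y in Ioi x, Real.exp (-(c * (y - x))) = 1 / c := by
  have hderiv : ∀ y ∈ Ici x,
      HasDerivAt (fun y => -(1 / c) * Real.exp (-(c * (y - x))))
        (Real.exp (-(c * (y - x)))) y := by
    intro y _
    have h1 : HasDerivAt (fun y : ℝ => -(c * (y - x))) (-c) y := by
      exact (((hasDerivAt_id y).sub_const x).const_mul c).neg.congr_deriv (by simp)
    have h2 := (h1.exp.const_mul (-(1 / c)))
    refine h2.congr_deriv ?_
    field_simp
  have htend : Tendsto (fun y => -(1 / c) * Real.exp (-(c * (y - x)))) atTop (𝓝 0) := by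
    have h1 : Tendsto (fun y : ℝ => -(c * (y - x))) atTop atBot := by
      apply tendsto_neg_atTop_atBot.comp
      exact (tendsto_atTop_add_const_right _ (-x) tendsto_id).const_mul_atTop hc
    have h2 := Real.tendsto_exp_atBot.comp h1
    simpa using h2.const_mul (-(1 / c))
  have key := integral_Ioi_of_hasDerivAt_of_tendsto' hderiv (integrableOn_exp_ker hc x) htend
  rw [key]
  simp

lemma H_bdd (hc : 0 < c) (f : SchwartzMap ℝ ℂ) :
    ∃ C : ℝ, ∀ x, ‖H c (⇑f) x‖ ≤ C := by
  refine ⟨(1 / c) * SchwartzMap.seminorm ℝ 0 0 f, fun x => ?_⟩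
  unfold H
  rw [integral_Ici_eq_integral_Ioi]
  have hint : IntegrableOn
      (fun y => Real.exp (-(c * (y - x))) * SchwartzMap.seminorm ℝ 0 0 f) (Ioi x) :=
    (integrableOn_exp_ker hc x).mul_const _
  refine (norm_integral_le_of_norm_le hint ?_).trans ?_
  · filter_upwards with y
    rw [norm_mul]
    have h2 : ‖((Real.exp (-(c * (y - x))) : ℝ) : ℂ)‖ = Real.exp (-(c * (y - x))) := by
      rw [Complex.norm_real, Real.norm_eq_abs, abs_of_pos (Real.exp_pos _)]
    rw [h2]
    exact mul_le_mul_of_nonneg_left (f.norm_le_seminorm ℝ y) (Real.exp_pos _).le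
  · rw [integral_mul_const, integral_exp_ker hc x]

lemma tendsto_top (f : SchwartzMap ℝ ℂ) : Tendsto f atTop (𝓝 0) := by
  have h := ZeroAtInftyContinuousMapClass.zero_at_infty (f := f)
  rw [cocompact_eq_atBot_atTop] at h
  exact h.mono_left le_sup_right

lemma tendsto_bot (f : SchwartzMap ℝ ℂ) : Tendsto f atBot (𝓝 0) := by
  have h := ZeroAtInftyContinuousMapClass.zero_at_infty (f := f)
  rw [cocompact_eq_atBot_atTop] at h
  exact h.mono_left le_sup_left

lemma hasDerivAt_schwartz (f : SchwartzMap ℝ ℂ) (x : ℝ) :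
    HasDerivAt (⇑f) (SchwartzMap.derivCLM ℝ ℂ f x) x := by
  rw [SchwartzMap.derivCLM_apply]
  exact ((f.smooth 1).differentiable (by norm_num) x).hasDerivAt

lemma H_derivCLM (hc : 0 < c) (f : SchwartzMap ℝ ℂ) (x : ℝ) :
    H c ⇑(SchwartzMap.derivCLM ℝ ℂ f) x = c * H c (⇑f) x - f x := by
  set f' := SchwartzMap.derivCLM ℝ ℂ f with hf'
  have hφ : ∀ y, HasDerivAt (fun y => ((Real.exp (-(c * (y - x))) : ℝ) : ℂ) * f y)
      ((((-c) * Real.exp (-(c * (y - x))) : ℝ) : ℂ) * f y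
        + ((Real.exp (-(c * (y - x))) : ℝ) : ℂ) * f' y) y := by
    intro y
    have h1 : HasDerivAt (fun y : ℝ => -(c * (y - x))) (-c) y := by
      exact (((hasDerivAt_id y).sub_const x).const_mul c).neg.congr_deriv (by simp)
    have hE : HasDerivAt (fun y : ℝ => ((Real.exp (-(c * (y - x))) : ℝ) : ℂ))
        ((((-c) * Real.exp (-(c * (y - x))) : ℝ) : ℂ)) y := by
      have := (h1.exp).ofReal_comp
      convert this using 1
      push_cast; ring
    exact hE.mul (hasDerivAt_schwartz f y)
  have hint2 : IntegrableOn (fun y => ((Real.exp (-(c * (y - x))) : ℝ) : ℂ) * f' y) (Ioi x) :=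
    (integrableOn_E_mul hc f' x).mono_set Ioi_subset_Ici_self
  have hint1 : IntegrableOn
      (fun y => (((-c) * Real.exp (-(c * (y - x))) : ℝ) : ℂ) * f y) (Ioi x) := by
    have h0' : IntegrableOn
        (fun y => ((-c : ℝ) : ℂ) * (((Real.exp (-(c * (y - x))) : ℝ) : ℂ) * f y)) (Ici x) :=
      (integrableOn_E_mul hc f x).const_mul _
    have h0 := h0'.mono_set Ioi_subset_Ici_self
    refine h0.congr (ae_of_all _ fun y => ?_)
    beta_reduce
    push_cast
    ring
  have htend : Tendsto (fun y => ((Real.exp (-(c * (y - x))) : ℝ) : ℂ) * f y) atTop (𝓝 0) := by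
    refine squeeze_zero_norm' ?_ (by simpa using (tendsto_top f).norm)
    filter_upwards [Filter.eventually_ge_atTop x] with y hy
    rw [norm_mul]
    have h2 : ‖((Real.exp (-(c * (y - x))) : ℝ) : ℂ)‖ = Real.exp (-(c * (y - x))) := by
      rw [Complex.norm_real, Real.norm_eq_abs, abs_of_pos (Real.exp_pos _)]
    rw [h2]
    refine mul_le_of_le_one_left (norm_nonneg _) ?_
    rw [Real.exp_le_one_iff]
    nlinarith
  have key := integral_Ioi_of_hasDerivAt_of_tendsto' (fun y _ => hφ y) (hint1.add hint2) htend
  rw [integral_add hint1 hint2] at key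
  have e1 : ∫ y in Ioi x, (((-c) * Real.exp (-(c * (y - x))) : ℝ) : ℂ) * f y
      = ((-c : ℝ) : ℂ) * ∫ y in Ioi x, ((Real.exp (-(c * (y - x))) : ℝ) : ℂ) * f y := by
    rw [← integral_const_mul]
    refine setIntegral_congr_fun measurableSet_Ioi fun y _ => ?_
    beta_reduce
    push_cast
    ring
  rw [e1] at key
  have e2 : ((Real.exp (-(c * (x - x))) : ℝ) : ℂ) * f x = f x := by
    norm_num
  rw [e2] at key
  unfold H
  rw [integral_Ici_eq_integral_Ioi, integral_Ici_eq_integral_Ioi]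
  push_cast at key ⊢
  linear_combination key

def Dv (f : SchwartzMap ℝ ℂ) : SchwartzMap ℝ ℂ := SchwartzMap.derivCLM ℝ ℂ f

lemma hasDerivAt_Dv (f : SchwartzMap ℝ ℂ) (x : ℝ) : HasDerivAt (⇑f) (Dv f x) x :=
  hasDerivAt_schwartz f x

lemma H_Dv (hc : 0 < c) (f : SchwartzMap ℝ ℂ) (x : ℝ) :
    H c ⇑(Dv f) x = c * H c (⇑f) x - f x :=
  H_derivCLM hc f x

lemma integrable_star (f : SchwartzMap ℝ ℂ) :
    Integrable (fun x => star (f x)) (volume : Measure ℝ) := by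
  refine (f.integrable (μ := volume)).norm.mono'
    ((continuous_star.comp f.continuous).aestronglyMeasurable) ?_
  filter_upwards with x
  simp

def Phi (a b c : ℝ) (u : SchwartzMap ℝ ℂ) (x : ℝ) : ℂ :=
  (Complex.I * (a:ℂ)) * (((c:ℂ) * H c (⇑u) x - u x) * star (u x))
  + (-(Complex.I * (a:ℂ))) * (H c (⇑u) x * star (Dv u x))
  + (b:ℂ) * (((c:ℂ)^2 * H c (⇑u) x - (c:ℂ) * u x - Dv u x) * star (u x))
  + (-(b:ℂ)) * (((c:ℂ) * H c (⇑u) x - u x) * star (Dv u x))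
  + (b:ℂ) * (H c (⇑u) x * star (Dv (Dv u) x))

def Gf (a b c : ℝ) (u : SchwartzMap ℝ ℂ) (x : ℝ) : ℂ :=
  (Complex.I * (a:ℂ) * (c:ℂ)^2 + (b:ℂ) * (c:ℂ)^3) * (H c (⇑u) x * star (u x))
  + (-(Complex.I * (a:ℂ) * (c:ℂ)) - (b:ℂ) * (c:ℂ)^2) * (u x * star (u x))
  + (-(Complex.I * (a:ℂ)) - (b:ℂ) * (c:ℂ)) * (Dv u x * star (u x))
  + (-(b:ℂ)) * (Dv (Dv u) x * star (u x))
  + (-(Complex.I * (a:ℂ))) * (H c (⇑u) x * star (Dv (Dv u) x))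
  + (b:ℂ) * (H c (⇑u) x * star (Dv (Dv (Dv u)) x))

lemma hasDerivAt_Phi (hc : 0 < c) (a b : ℝ) (u : SchwartzMap ℝ ℂ) (x : ℝ) :
    HasDerivAt (Phi a b c u) (Gf a b c u x) x := by
  have hh := H_hasDerivAt hc u x
  have hu := hasDerivAt_Dv u x
  have hu1 := hasDerivAt_Dv (Dv u) x
  have hu2 := hasDerivAt_Dv (Dv (Dv u)) x
  have hsu := hu.star
  have hsu1 := hu1.star
  have hsu2 := hu2.star
  have t1 := ((hh.const_mul (c:ℂ)).sub hu).mul hsu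
  have t2 := hh.mul hsu1
  have t3 := (((hh.const_mul ((c:ℂ)^2)).sub (hu.const_mul (c:ℂ))).sub hu1).mul hsu
  have t4 := ((hh.const_mul (c:ℂ)).sub hu).mul hsu1
  have t5 := hh.mul hsu2
  have hsum := ((((t1.const_mul (Complex.I * (a:ℂ))).add
    (t2.const_mul (-(Complex.I * (a:ℂ))))).add
    (t3.const_mul ((b:ℂ)))).add (t4.const_mul (-(b:ℂ)))).add (t5.const_mul ((b:ℂ)))
  have hfun : HasDerivAt (Phi a b c u) _ x := hsum
  convert hfun using 1
  unfold Gf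
  simp only [Pi.sub_apply]
  ring

lemma continuous_H (hc : 0 < c) (u : SchwartzMap ℝ ℂ) : Continuous (H c (⇑u)) :=
  continuous_iff_continuousAt.mpr fun x =>
    (H_hasDerivAt hc u x).differentiableAt.continuousAt

lemma integrable_Gf (hc : 0 < c) (a b : ℝ) (u : SchwartzMap ℝ ℂ) :
    Integrable (Gf a b c u) (volume : Measure ℝ) := by
  obtain ⟨C, hC⟩ := H_bdd hc u
  have hHm : AEStronglyMeasurable (H c (⇑u)) volume :=
    (continuous_H hc u).aestronglyMeasurable
  have i1 : Integrable (fun x => H c (⇑u) x * star (u x)) volume :=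
    (integrable_star u).bdd_mul hHm (ae_of_all _ hC)
  have i2 : Integrable (fun x => u x * star (u x)) volume :=
    (integrable_star u).bdd_mul u.continuous.aestronglyMeasurable
      (ae_of_all _ fun x => u.norm_le_seminorm ℝ x)
  have i3 : Integrable (fun x => Dv u x * star (u x)) volume :=
    (integrable_star u).bdd_mul (Dv u).continuous.aestronglyMeasurable
      (ae_of_all _ fun x => (Dv u).norm_le_seminorm ℝ x)
  have i4 : Integrable (fun x => Dv (Dv u) x * star (u x)) volume :=
    (integrable_star u).bdd_mul (Dv (Dv u)).continuous.aestronglyMeasurable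
      (ae_of_all _ fun x => (Dv (Dv u)).norm_le_seminorm ℝ x)
  have i5 : Integrable (fun x => H c (⇑u) x * star (Dv (Dv u) x)) volume :=
    (integrable_star (Dv (Dv u))).bdd_mul hHm (ae_of_all _ hC)
  have i6 : Integrable (fun x => H c (⇑u) x * star (Dv (Dv (Dv u)) x)) volume :=
    (integrable_star (Dv (Dv (Dv u)))).bdd_mul hHm (ae_of_all _ hC)
  exact (((((i1.const_mul _).add (i2.const_mul _)).add (i3.const_mul _)).add
    (i4.const_mul _)).add (i5.const_mul _)).add (i6.const_mul _)

lemma tendsto_aux {l : Filter ℝ} {F : ℝ → ℂ} (hF : ∃ C, ∀ x, ‖F x‖ ≤ C)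
    {g : ℝ → ℂ} (hg : Tendsto g l (𝓝 0)) (K : ℂ) :
    Tendsto (fun x => K * (F x * star (g x))) l (𝓝 0) := by
  obtain ⟨C, hC⟩ := hF
  have h0 : Tendsto (fun x => star (g x)) l (𝓝 0) := by
    simpa [Function.comp_def] using ((continuous_star.tendsto (0:ℂ)).comp hg)
  have h1 : Tendsto (fun x => F x * star (g x)) l (𝓝 0) := by
    have h2 : Tendsto (fun x => C * ‖star (g x)‖) l (𝓝 0) := by
      simpa using h0.norm.const_mul C
    refine squeeze_zero_norm (fun x => ?_) h2
    rw [norm_mul]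
    exact mul_le_mul_of_nonneg_right (hC x) (norm_nonneg _)
  simpa using h1.const_mul K

lemma tendsto_Phi (hc : 0 < c) (a b : ℝ) (u : SchwartzMap ℝ ℂ) {l : Filter ℝ}
    (h0 : Tendsto (⇑u) l (𝓝 0)) (h1 : Tendsto (⇑(Dv u)) l (𝓝 0))
    (h2 : Tendsto (⇑(Dv (Dv u))) l (𝓝 0)) :
    Tendsto (Phi a b c u) l (𝓝 0) := by
  obtain ⟨C, hC⟩ := H_bdd hc u
  have bH : ∃ C', ∀ x, ‖H c (⇑u) x‖ ≤ C' := ⟨C, hC⟩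
  have b1 : ∃ C', ∀ x, ‖(c:ℂ) * H c (⇑u) x - u x‖ ≤ C' := by
    refine ⟨|c| * C + SchwartzMap.seminorm ℝ 0 0 u, fun x => ?_⟩
    refine (norm_sub_le _ _).trans ?_
    rw [norm_mul, Complex.norm_real, Real.norm_eq_abs]
    exact add_le_add (mul_le_mul_of_nonneg_left (hC x) (abs_nonneg c))
      (u.norm_le_seminorm ℝ x)
  have b3 : ∃ C', ∀ x, ‖(c:ℂ)^2 * H c (⇑u) x - (c:ℂ) * u x - Dv u x‖ ≤ C' := by
    refine ⟨(|c|^2 * C + |c| * SchwartzMap.seminorm ℝ 0 0 u)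
      + SchwartzMap.seminorm ℝ 0 0 (Dv u), fun x => ?_⟩
    refine (norm_sub_le _ _).trans (add_le_add ((norm_sub_le _ _).trans (add_le_add ?_ ?_))
      ((Dv u).norm_le_seminorm ℝ x))
    · rw [norm_mul, norm_pow, Complex.norm_real, Real.norm_eq_abs]
      exact mul_le_mul_of_nonneg_left (hC x) (by positivity)
    · rw [norm_mul, Complex.norm_real, Real.norm_eq_abs]
      exact mul_le_mul_of_nonneg_left (u.norm_le_seminorm ℝ x) (abs_nonneg c)
  have T1 := tendsto_aux b1 h0 (Complex.I * (a:ℂ))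
  have T2 := tendsto_aux bH h1 (-(Complex.I * (a:ℂ)))
  have T3 := tendsto_aux b3 h0 ((b:ℂ))
  have T4 := tendsto_aux b1 h1 (-(b:ℂ))
  have T5 := tendsto_aux bH h2 ((b:ℂ))
  unfold Phi
  simpa using (((T1.add T2).add T3).add T4).add T5

lemma integral_Gf_zero (hc : 0 < c) (a b : ℝ) (u : SchwartzMap ℝ ℂ) :
    (∫ x : ℝ, Gf a b c u x) = 0 := by
  have hd := hasDerivAt_Phi hc a b u
  have hG := integrable_Gf hc a b u
  have hbot := tendsto_Phi hc a b u (tendsto_bot u) (tendsto_bot (Dv u))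
    (tendsto_bot (Dv (Dv u)))
  have htop := tendsto_Phi hc a b u (tendsto_top u) (tendsto_top (Dv u))
    (tendsto_top (Dv (Dv u)))
  have A := integral_Iic_of_hasDerivAt_of_tendsto' (a := 0) (fun x _ => hd x)
    hG.integrableOn hbot
  have B := integral_Ioi_of_hasDerivAt_of_tendsto' (a := 0) (fun x _ => hd x)
    hG.integrableOn htop
  rw [← intervalIntegral.integral_Iic_add_Ioi (hG.integrableOn) (hG.integrableOn), A, B]
  ring

lemma inner_eq (hc : 0 < c) (a b : ℝ) (u : SchwartzMap ℝ ℂ) (x : ℝ) :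
    (∫ y in Ici x, ((Real.exp (-(c * (y - x))) : ℝ) : ℂ) *
        ((Complex.I * (a:ℂ) * Dv (Dv u) y + (b:ℂ) * Dv (Dv (Dv u)) y) * star (u x)
          + u y * star (Complex.I * (a:ℂ) * Dv (Dv u) x + (b:ℂ) * Dv (Dv (Dv u)) x)))
      = Gf a b c u x := by
  set K1 : ℂ := Complex.I * (a:ℂ) * star (u x) with hK1
  set K2 : ℂ := (b:ℂ) * star (u x) with hK2
  set K3 : ℂ := star (Complex.I * (a:ℂ) * Dv (Dv u) x + (b:ℂ) * Dv (Dv (Dv u)) x) with hK3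
  have step1 : (∫ y in Ici x, ((Real.exp (-(c * (y - x))) : ℝ) : ℂ) *
        ((Complex.I * (a:ℂ) * Dv (Dv u) y + (b:ℂ) * Dv (Dv (Dv u)) y) * star (u x)
          + u y * K3))
      = K1 * H c ⇑(Dv (Dv u)) x + (K2 * H c ⇑(Dv (Dv (Dv u))) x + K3 * H c (⇑u) x) := by
    have e0 : (fun y => ((Real.exp (-(c * (y - x))) : ℝ) : ℂ) *
        ((Complex.I * (a:ℂ) * Dv (Dv u) y + (b:ℂ) * Dv (Dv (Dv u)) y) * star (u x)
          + u y * K3))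
      = fun y => K1 * (((Real.exp (-(c * (y - x))) : ℝ) : ℂ) * Dv (Dv u) y)
          + (K2 * (((Real.exp (-(c * (y - x))) : ℝ) : ℂ) * Dv (Dv (Dv u)) y)
            + K3 * (((Real.exp (-(c * (y - x))) : ℝ) : ℂ) * u y)) := by
      funext y
      rw [hK1, hK2]
      ring
    rw [e0]
    have h1 : IntegrableOn (fun y => K1 * (((Real.exp (-(c * (y - x))) : ℝ) : ℂ) * Dv (Dv u) y))
        (Ici x) := (integrableOn_E_mul hc (Dv (Dv u)) x).const_mul K1
    have h2 : IntegrableOn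
        (fun y => K2 * (((Real.exp (-(c * (y - x))) : ℝ) : ℂ) * Dv (Dv (Dv u)) y))
        (Ici x) := (integrableOn_E_mul hc (Dv (Dv (Dv u))) x).const_mul K2
    have h3 : IntegrableOn (fun y => K3 * (((Real.exp (-(c * (y - x))) : ℝ) : ℂ) * u y))
        (Ici x) := (integrableOn_E_mul hc u x).const_mul K3
    have h23 : IntegrableOn
        (fun y => K2 * (((Real.exp (-(c * (y - x))) : ℝ) : ℂ) * Dv (Dv (Dv u)) y)
          + K3 * (((Real.exp (-(c * (y - x))) : ℝ) : ℂ) * u y)) (Ici x) := h2.add h3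
    rw [integral_add h1 h23, integral_add h2 h3,
      integral_const_mul, integral_const_mul, integral_const_mul]
    rfl
  rw [step1, H_Dv hc (Dv (Dv u)) x, H_Dv hc (Dv u) x, H_Dv hc u x]
  have hK3' : K3 = -(Complex.I * (a:ℂ)) * star (Dv (Dv u) x)
      + (b:ℂ) * star (Dv (Dv (Dv u)) x) := by
    rw [hK3]
    simp only [star_add, star_mul', RCLike.star_def, map_mul, Complex.conj_I,
      Complex.conj_ofReal]
    ring
  rw [hK1, hK2, hK3']
  unfold Gf
  push_cast
  ring

end LPTV

end

end LPTVsection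

theorem linear_part_trace_vanishes (a b k : ℝ) (hk : 0 < k) (u : SchwartzMap ℝ ℂ) :
    (∫ x : ℝ, ∫ y in Set.Ici x,
        ((Real.exp (-2 * k * (y - x)) : ℝ) : ℂ) *
          ((Complex.I * (a : ℂ) * deriv (deriv (fun z => u z)) y
              + (b : ℂ) * deriv (deriv (deriv (fun z => u z))) y) * (starRingEnd ℂ) (u x)
            + u y * (starRingEnd ℂ)
                (Complex.I * (a : ℂ) * deriv (deriv (fun z => u z)) x
                  + (b : ℂ) * deriv (deriv (deriv (fun z => u z))) x))).re = 0 := by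
  have hc : (0:ℝ) < 2 * k := by linarith
  have e1 : deriv (fun z => u z) = ⇑(LPTV.Dv u) :=
    funext fun t => (LPTV.hasDerivAt_Dv u t).deriv.symm
  have e2 : deriv ⇑(LPTV.Dv u) = ⇑(LPTV.Dv (LPTV.Dv u)) :=
    funext fun t => (LPTV.hasDerivAt_Dv (LPTV.Dv u) t).deriv.symm
  have e3 : deriv ⇑(LPTV.Dv (LPTV.Dv u)) = ⇑(LPTV.Dv (LPTV.Dv (LPTV.Dv u))) :=
    funext fun t => (LPTV.hasDerivAt_Dv (LPTV.Dv (LPTV.Dv u)) t).deriv.symm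
  have hexp : ∀ x y : ℝ, (-2 * k * (y - x)) = -(2 * k * (y - x)) := fun x y => by ring
  simp only [e1, e2, e3, hexp, starRingEnd_apply]
  have key := LPTV.inner_eq (c := 2 * k) hc a b u
  rw [integral_congr_ae (ae_of_all _ key), LPTV.integral_Gf_zero hc a b u]
  simp
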